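/- arXiv:0809.2059 — 5 statements merged into one kernel-verified Lean document; each statement's English description precedes it below -/
import Mathlib

section
/- Let N ≥ 1, α₀ < 0 ≤ αᵢ (i = 1,…,N), κᵢ > 0, c > 0, and suppose λ₀ = x₀ + i·y₀ with y₀ ≠ 0 is a nonreal root of the characteristic function D(λ) = c·λ + α₀ + Σᵢ αᵢ·e^{−κᵢ·λ}. Then x₀ is strictly less than any real root of D; that is, if D(r) = 0 for a real number r, then x₀ < r. -/
open Real Filter Set Topology

/-- a nonreal root x₀ + i y₀ of the characteristic function
D(λ) = c λ + α₀ + Σ αᵢ e^{−κᵢ λ} has real part strictly less than any real root. -/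
theorem stmt1 (N : ℕ) (hN : 0 < N) (c α₀ : ℝ) (α κ : Fin N → ℝ)
    (hc : 0 < c) (hα₀ : α₀ < 0) (hα : ∀ i, 0 ≤ α i) (hκ : ∀ i, 0 < κ i)
    (D : ℂ → ℂ)
    (hD : ∀ z : ℂ, D z = (c : ℂ) * z + (α₀ : ℂ) +
      ∑ i, (α i : ℂ) * Complex.exp (-(κ i : ℂ) * z))
    (x₀ y₀ : ℝ) (hy₀ : y₀ ≠ 0)
    (hroot : D ((x₀ : ℂ) + (y₀ : ℂ) * Complex.I) = 0) :
    ∀ r : ℝ, D (r : ℂ) = 0 → x₀ < r := by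
  intro r hr
  rw [hD] at hroot hr
  have hre := congrArg Complex.re hroot
  have him := congrArg Complex.im hroot
  have hrr := congrArg Complex.re hr
  have hkey : ∀ i : Fin N, -(κ i : ℂ) * ((x₀:ℂ) + (y₀:ℂ)*Complex.I)
      = ((-(κ i * x₀) : ℝ) : ℂ) + ((-(κ i * y₀) : ℝ):ℂ) * Complex.I := by
    intro i; push_cast; ring
  have hkey2 : ∀ i : Fin N, -(κ i : ℂ) * (r:ℂ) = ((-(κ i * r) : ℝ) : ℂ) := by
    intro i; push_cast; ring
  simp only [hkey, hkey2, Complex.add_re, Complex.add_im, Complex.mul_re, Complex.mul_im,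
    Complex.re_sum, Complex.im_sum, Complex.ofReal_re, Complex.ofReal_im,
    Complex.I_re, Complex.I_im, Complex.exp_re, Complex.exp_im, Complex.zero_re,
    Complex.zero_im, mul_zero, zero_mul, mul_one, sub_zero, add_zero, zero_add,
    Real.cos_neg, Real.sin_neg, Real.cos_zero, Real.sin_zero, mul_neg, neg_zero,
    Finset.sum_neg_distrib] at hre him hrr
  -- hre : c * x₀ + α₀ + ∑ i, α i * (rexp (-(κ i * x₀)) * cos (κ i * y₀)) = 0
  -- him : c * y₀ + -∑ i, α i * (rexp (-(κ i * x₀)) * sin (κ i * y₀)) = 0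
  -- hrr : c * r + α₀ + ∑ i, α i * rexp (-(κ i * r)) = 0
  by_contra hlt
  push_neg at hlt   -- hlt : r ≤ x₀
  set y := |y₀| with hy
  have hy0 : 0 < y := abs_pos.2 hy₀
  have hcos : ∀ i, Real.cos (κ i * y) = Real.cos (κ i * y₀) := by
    intro i; rcases abs_choice y₀ with h | h
    · rw [hy, h]
    · rw [hy, h, mul_neg, Real.cos_neg]
  have himy : c * y = ∑ i, α i * (rexp (-(κ i * x₀)) * Real.sin (κ i * y)) := by
    rcases hy₀.lt_or_gt with h | h
    · rw [hy, abs_of_neg h]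
      simp only [mul_neg, Real.sin_neg, Finset.sum_neg_distrib]
      linarith [him]
    · rw [hy, abs_of_pos h]; linarith [him]
  -- c ≤ T
  have h1 : c * y ≤ (∑ i, α i * (κ i * rexp (-(κ i * x₀)))) * y := by
    rw [himy, Finset.sum_mul]
    apply Finset.sum_le_sum
    intro i _
    have hs : Real.sin (κ i * y) ≤ κ i * y :=
      le_of_lt (Real.sin_lt (mul_pos (hκ i) hy0))
    have h2 := mul_le_mul_of_nonneg_left hs
      (mul_nonneg (hα i) (Real.exp_pos (-(κ i * x₀))).le)
    nlinarith [h2]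
  have hT : c ≤ ∑ i, α i * (κ i * rexp (-(κ i * x₀))) :=
    (mul_le_mul_iff_of_pos_right hy0).mp h1
  -- f(x₀) > 0
  have hsplit : ∑ i, α i * (rexp (-(κ i * x₀)) * (1 - Real.cos (κ i * y₀)))
      = ∑ i, α i * rexp (-(κ i * x₀)) - ∑ i, α i * (rexp (-(κ i * x₀)) * Real.cos (κ i * y₀)) := by
    rw [← Finset.sum_sub_distrib]
    exact Finset.sum_congr rfl fun i _ => by ring
  obtain ⟨i₀, -, hi₀⟩ : ∃ i ∈ Finset.univ, (0:ℝ) < α i * (rexp (-(κ i * x₀)) * Real.sin (κ i * y)) := by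
    apply Finset.exists_lt_of_sum_lt (f := fun _ => (0:ℝ))
    rw [Finset.sum_const_zero, ← himy]
    positivity
  have hα₀' : 0 < α i₀ := by
    rcases (hα i₀).lt_or_eq with h | h
    · exact h
    · exfalso; rw [← h] at hi₀; simp at hi₀
  have hsin0 : Real.sin (κ i₀ * y) ≠ 0 := by
    intro h; rw [h, mul_zero, mul_zero] at hi₀; exact lt_irrefl 0 hi₀
  have hcos1 : Real.cos (κ i₀ * y₀) < 1 := by
    rw [← hcos i₀]
    rcases (Real.cos_le_one (κ i₀ * y)).lt_or_eq with h | h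
    · exact h
    · exfalso; apply hsin0
      have := Real.sin_sq_add_cos_sq (κ i₀ * y)
      nlinarith
  have hf0 : 0 < c * x₀ + α₀ + ∑ i, α i * rexp (-(κ i * x₀)) := by
    have hpos : 0 < ∑ i, α i * (rexp (-(κ i * x₀)) * (1 - Real.cos (κ i * y₀))) := by
      apply Finset.sum_pos'
      · intro i _
        exact mul_nonneg (hα i) (mul_nonneg (Real.exp_pos _).le
          (by linarith [Real.cos_le_one (κ i * y₀)]))
      · exact ⟨i₀, Finset.mem_univ _,
          mul_pos hα₀' (mul_pos (Real.exp_pos _) (by linarith))⟩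
    rw [hsplit] at hpos
    linarith [hre]
  -- convexity of exp
  have hsum : ∑ i, (α i * rexp (-(κ i * x₀)) + (x₀ - r) * (α i * (κ i * rexp (-(κ i * x₀)))))
      ≤ ∑ i, α i * rexp (-(κ i * r)) := by
    apply Finset.sum_le_sum
    intro i _
    have he : rexp (-(κ i * x₀)) * (1 + κ i * (x₀ - r)) ≤ rexp (-(κ i * r)) := by
      have h3 : rexp (-(κ i * r)) = rexp (-(κ i * x₀)) * rexp (κ i * (x₀ - r)) := by
        rw [← Real.exp_add]; ring_nf
      rw [h3]
      exact mul_le_mul_of_nonneg_left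
        (by linarith [Real.add_one_le_exp (κ i * (x₀ - r))]) (Real.exp_pos _).le
    have h4 := mul_le_mul_of_nonneg_left he (hα i)
    nlinarith [h4]
  rw [Finset.sum_add_distrib, ← Finset.mul_sum] at hsum
  have hprod : (x₀ - r) * c ≤ (x₀ - r) * ∑ i, α i * (κ i * rexp (-(κ i * x₀))) :=
    mul_le_mul_of_nonneg_left hT (by linarith)
  linarith [hrr, hsum, hprod, hf0]
end

section
/- Let N ≥ 1, α₀ < 0 ≤ αᵢ (i = 1,…,N), κᵢ > 0, Σ_{i=0}^N αᵢ > 0, and suppose c ≥ Σ_{i=1}^N αᵢ·κᵢ. Then for the real characteristic function D(x) = c·x + α₀ + Σᵢ αᵢ·e^{−κᵢ·x} one has D(0) > 0 and D'(0) ≥ 0; consequently every real root of D is strictly negative. -/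
open Real Filter Set Topology

/-- if c ≥ Σ αᵢ κᵢ then D(0) > 0 and D'(0) ≥ 0, and every real root
of D is strictly negative. -/
theorem stmt5 (N : ℕ) (hN : 0 < N) (c α₀ : ℝ) (α κ : Fin N → ℝ)
    (hc : 0 < c) (hα₀ : α₀ < 0) (hα : ∀ i, 0 ≤ α i) (hκ : ∀ i, 0 < κ i)
    (hsum : 0 < α₀ + ∑ i, α i)
    (hcge : (∑ i, α i * κ i) ≤ c)
    (D : ℝ → ℝ)
    (hD : ∀ x, D x = c * x + α₀ + ∑ i, α i * Real.exp (-(κ i) * x)) :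
    0 < D 0 ∧ 0 ≤ deriv D 0 ∧ ∀ x, D x = 0 → x < 0 := by
  have hDfun : D = fun x => c * x + α₀ + ∑ i, α i * Real.exp (-(κ i) * x) := funext hD
  subst hDfun
  have key : ∀ x : ℝ, 0 ≤ x → 0 < c * x + α₀ + ∑ i, α i * Real.exp (-(κ i) * x) := by
    intro x hx
    have h2 : (∑ i, α i * (1 - κ i * x)) ≤ ∑ i, α i * Real.exp (-(κ i) * x) := by
      apply Finset.sum_le_sum
      intro i _
      apply mul_le_mul_of_nonneg_left _ (hα i)
      have := Real.add_one_le_exp (-(κ i) * x)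
      linarith
    have h3 : ∑ i, α i * (1 - κ i * x) = (∑ i, α i) - (∑ i, α i * κ i) * x := by
      rw [Finset.sum_mul, ← Finset.sum_sub_distrib]
      exact Finset.sum_congr rfl fun i _ => by ring
    have h4 : 0 ≤ (c - ∑ i, α i * κ i) * x := mul_nonneg (by linarith) hx
    nlinarith [h2, h3, h4]
  have hder : HasDerivAt (fun x => c * x + α₀ + ∑ i, α i * Real.exp (-(κ i) * x))
      (c + ∑ i, α i * (Real.exp (-(κ i) * 0) * (-(κ i)))) 0 := by
    have h1 : HasDerivAt (fun x : ℝ => c * x + α₀) c 0 := by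
      simpa using ((hasDerivAt_id (0:ℝ)).const_mul c).add_const α₀
    have h2 : HasDerivAt (fun x : ℝ => ∑ i, α i * Real.exp (-(κ i) * x))
        (∑ i, α i * (Real.exp (-(κ i) * 0) * (-(κ i)))) 0 := by
      apply HasDerivAt.fun_sum
      intro i _
      have hlin : HasDerivAt (fun x : ℝ => -(κ i) * x) (-(κ i)) 0 := by
        simpa using (hasDerivAt_id (0:ℝ)).const_mul (-(κ i))
      exact ((Real.hasDerivAt_exp (-(κ i) * 0)).comp 0 hlin).const_mul (α i)
    exact h1.add h2
  refine ⟨by simpa using key 0 le_rfl, ?_, ?_⟩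
  · rw [hder.deriv]
    have : ∑ i, α i * (Real.exp (-(κ i) * 0) * (-(κ i))) = -∑ i, α i * κ i := by
      rw [← Finset.sum_neg_distrib]
      exact Finset.sum_congr rfl fun i _ => by simp
    rw [this]; linarith
  · intro x hx
    by_contra h
    push_neg at h
    exact absurd hx (ne_of_gt (key x h))
end

section
/- Suppose g : ℝ^{N+1} → ℝ satisfies condition (G3): there are M₀ > 0 and η ∈ (0,1) such that whenever |s₀| = max_{0≤i≤N}|sᵢ| and |s₀| ≥ M₀, then |g(s) + s₀| ≤ η·|s₀|. Let M ≥ M₀ and let φ : ℝ → ℝ be a C¹ solution of c·φ'(x) = −g(Φ(x)) (c > 0) with φ(−∞) = 1, and suppose x₀ = inf{x : |φ(x)| ≥ M} is finite. Then |φ(x₀)| = M and φ(x₀)·g(Φ(x₀)) < 0 with |g(Φ(x₀))| ≥ (1−η)·M; in particular d/dx |φ(x)| at x₀ is at least (1−η)·M₀/c. -/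
open Real Filter Set Topology

/-- from Lemma 1.3 / condition (G3): at the first point x₀ where
|φ| reaches M ≥ M₀, one has |φ(x₀)| = M, φ(x₀) and g(Φ(x₀)) have opposite signs
with |g(Φ(x₀))| ≥ (1−η)M, and the derivative of |φ| at x₀ is ≥ (1−η)M₀/c. -/
theorem stmt8 (N : ℕ) (c M₀ η M : ℝ) (hc : 0 < c) (hM₀ : 1 < M₀)
    (hη : η ∈ Set.Ioo (0:ℝ) 1) (hM : M₀ ≤ M)
    (κ : Fin N → ℝ) (hκ : ∀ i, 0 < κ i)
    (g : ℝ → (Fin N → ℝ) → ℝ)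
    (hG3 : ∀ (s₀ : ℝ) (s : Fin N → ℝ),
      (∀ i, |s i| ≤ |s₀|) → M₀ ≤ |s₀| → |g s₀ s + s₀| ≤ η * |s₀|)
    (φ φ' : ℝ → ℝ)
    (hderiv : ∀ x, HasDerivAt φ (φ' x) x) (hcont : Continuous φ')
    (heq : ∀ x, c * φ' x = - g (φ x) (fun i => φ (x - κ i)))
    (hbc : Tendsto φ atBot (𝓝 1))
    (x₀ : ℝ) (hne : {x : ℝ | M ≤ |φ x|}.Nonempty)
    (hx₀ : IsGLB {x : ℝ | M ≤ |φ x|} x₀) :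
    |φ x₀| = M ∧
    φ x₀ * g (φ x₀) (fun i => φ (x₀ - κ i)) < 0 ∧
    (1 - η) * M ≤ |g (φ x₀) (fun i => φ (x₀ - κ i))| ∧
    ∀ d, HasDerivAt (fun x => |φ x|) d x₀ → (1 - η) * M₀ / c ≤ d := by
  obtain ⟨hη0, hη1⟩ := hη
  have hφcont : Continuous φ := by
    apply continuous_iff_continuousAt.2
    exact fun x => (hderiv x).continuousAt
  -- points strictly left of x₀ have |φ| < M
  have hlt : ∀ x, x < x₀ → |φ x| < M := by
    intro x hx
    by_contra h
    push_neg at h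
    exact absurd (hx₀.1 h) (not_le.2 hx)
  -- the set is closed, so x₀ belongs to it
  have hclosed : IsClosed {x : ℝ | M ≤ |φ x|} := by
    have : {x : ℝ | M ≤ |φ x|} = (fun x => |φ x|) ⁻¹' Set.Ici M := rfl
    rw [this]
    exact IsClosed.preimage (hφcont.abs) isClosed_Ici
  have hmem : x₀ ∈ {x : ℝ | M ≤ |φ x|} := by
    have := hx₀.mem_closure hne
    rwa [hclosed.closure_eq] at this
  have hge : M ≤ |φ x₀| := hmem
  have hle : |φ x₀| ≤ M := by
    have htend : Tendsto (fun x => |φ x|) (𝓝[<] x₀) (𝓝 |φ x₀|) :=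
      ((hφcont.abs).continuousAt).continuousWithinAt.tendsto
    refine le_of_tendsto htend ?_
    filter_upwards [self_mem_nhdsWithin] with x hx
    exact (hlt x hx).le
  have habs : |φ x₀| = M := le_antisymm hle hge
  have hMpos : (0:ℝ) < M := lt_of_lt_of_le (lt_trans one_pos (by linarith)) hM
  -- apply (G3)
  set G := g (φ x₀) (fun i => φ (x₀ - κ i)) with hG
  have hG3' : |G + φ x₀| ≤ η * M := by
    have h1 : ∀ i, |φ (x₀ - κ i)| ≤ |φ x₀| := by
      intro i
      rw [habs]
      exact (hlt _ (by linarith [hκ i])).le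
    have h2 : M₀ ≤ |φ x₀| := habs ▸ hM
    have := hG3 (φ x₀) (fun i => φ (x₀ - κ i)) h1 h2
    rwa [habs] at this
  have habs' := abs_le.1 hG3'
  have hsign : φ x₀ * G < 0 := by
    rcases abs_cases (φ x₀) with ⟨h1, h2⟩ | ⟨h1, h2⟩ <;> rw [habs] at h1
    · have hGneg : G < 0 := by nlinarith [habs'.2]
      rw [← h1]
      exact mul_neg_of_pos_of_neg hMpos hGneg
    · have hGpos : 0 < G := by nlinarith [habs'.1]
      exact mul_neg_of_neg_of_pos h2 hGpos
  have hGbig : (1 - η) * M ≤ |G| := by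
    have h := abs_sub_abs_le_abs_sub (φ x₀) (G + φ x₀)
    have h2 : φ x₀ - (G + φ x₀) = -G := by ring
    rw [h2, abs_neg, habs] at h
    linarith
  refine ⟨habs, hsign, hGbig, ?_⟩
  intro d hd
  have hφne : φ x₀ ≠ 0 := by
    intro h
    rw [h, abs_zero] at habs
    linarith
  have key : c * d = |G| := by
    rcases hφne.lt_or_gt with hneg | hpos
    · -- φ x₀ < 0, so |φ| = -φ near x₀
      have hev : ∀ᶠ x in 𝓝 x₀, φ x < 0 :=
        (hderiv x₀).continuousAt.eventually (eventually_lt_nhds hneg)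
      have heqv : (fun x => -φ x) =ᶠ[𝓝 x₀] (fun x => |φ x|) :=
        hev.mono fun x hx => (abs_of_neg hx).symm
      have hd2 : HasDerivAt (fun x => -φ x) d x₀ := hd.congr_of_eventuallyEq heqv
      have hd3 : HasDerivAt (fun x => -φ x) (-(φ' x₀)) x₀ := (hderiv x₀).neg
      have hde : d = -(φ' x₀) := hd2.unique hd3
      have hGpos : 0 < G := by nlinarith
      rw [hde, abs_of_pos hGpos]
      have := heq x₀
      rw [← hG] at this
      linarith [this]
    · have hev : ∀ᶠ x in 𝓝 x₀, 0 < φ x :=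
        (hderiv x₀).continuousAt.eventually (eventually_gt_nhds hpos)
      have heqv : φ =ᶠ[𝓝 x₀] (fun x => |φ x|) :=
        hev.mono fun x hx => (abs_of_pos hx).symm
      have hd2 : HasDerivAt φ d x₀ := hd.congr_of_eventuallyEq heqv
      have hde : d = φ' x₀ := hd2.unique (hderiv x₀)
      have hGneg : G < 0 := by nlinarith
      rw [hde, abs_of_neg hGneg]
      have := heq x₀
      rw [← hG] at this
      linarith [this]
  rw [div_le_iff₀ hc, mul_comm d c, key]
  calc (1 - η) * M₀ ≤ (1 - η) * M := by nlinarith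
    _ ≤ |G| := hGbig
end

section
/- Suppose g satisfies condition (G3) with constants M₀ > 1 and η ∈ (0,1). Then any globally defined solution φ : ℝ → ℝ of c·φ'(x) = −g(Φ(x)) (c > 0) satisfying φ(−∞) = 1 either satisfies |φ(x)| ≤ M₀ for all x ∈ ℝ, or satisfies φ(x) → +∞ or φ(x) → −∞ as x → ∞. -/
open Real Filter Set Topology

/-- Core blow-up lemma: if at `x₁` the solution exceeds `M₀` and dominates its
whole history in absolute value, then it tends to `+∞`. -/
lemma stmt9_core (N : ℕ) (c M₀ η : ℝ) (hc : 0 < c) (hM₀ : 0 < M₀)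
    (hη0 : 0 < η) (hη1 : η < 1)
    (κ : Fin N → ℝ) (hκ : ∀ i, 0 < κ i)
    (g : ℝ → (Fin N → ℝ) → ℝ)
    (hG3 : ∀ (s₀ : ℝ) (s : Fin N → ℝ),
      (∀ i, |s i| ≤ |s₀|) → M₀ ≤ |s₀| → |g s₀ s + s₀| ≤ η * |s₀|)
    (φ φ' : ℝ → ℝ)
    (hderiv : ∀ x, HasDerivAt φ (φ' x) x) (hcont : Continuous φ')
    (heq : ∀ x, c * φ' x = - g (φ x) (fun i => φ (x - κ i)))
    (x₁ : ℝ) (h1 : M₀ < φ x₁) (h2 : ∀ z ≤ x₁, |φ z| ≤ φ x₁) :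
    Tendsto φ atTop atTop := by
  have hcφ : Continuous φ := by
    rw [continuous_iff_continuousAt]; exact fun x => (hderiv x).continuousAt
  -- key differential inequality
  have key : ∀ x, (∀ z ≤ x, |φ z| ≤ φ x) → M₀ ≤ φ x → (1 - η) * φ x ≤ c * φ' x := by
    intro x hQ hMx
    have hxpos : 0 < φ x := lt_of_lt_of_le hM₀ hMx
    have habs : |φ x| = φ x := abs_of_pos hxpos
    have hs : ∀ i, |φ (x - κ i)| ≤ |φ x| := by
      intro i
      rw [habs]; exact hQ _ (by linarith [hκ i])
    have h := hG3 (φ x) (fun i => φ (x - κ i)) hs (by rw [habs]; exact hMx)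
    rw [habs] at h
    have h' := (abs_le.1 h).2
    rw [heq x]
    linarith
  -- the "good" predicate
  set Q : ℝ → Prop := fun x => ∀ z ≤ x, |φ z| ≤ φ x with hQdef
  have hQ1 : Q x₁ := h2
  -- main claim: Q holds for all x ≥ x₁
  have main : ∀ x, x₁ ≤ x → Q x := by
    by_contra hmain
    push_neg at hmain
    obtain ⟨x₂, hx₂, hQx₂⟩ := hmain
    set B : Set ℝ := {x | x₁ ≤ x ∧ ¬ Q x} with hBdef
    have hBne : B.Nonempty := ⟨x₂, hx₂, hQx₂⟩
    have hBbd : BddBelow B := ⟨x₁, fun x hx => hx.1⟩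
    set b := sInf B with hbdef
    have hbge : x₁ ≤ b := le_csInf hBne (fun x hx => hx.1)
    have hgood : ∀ x, x₁ ≤ x → x < b → Q x := by
      intro x hx1 hxb
      by_contra hq
      exact absurd (csInf_le hBbd ⟨hx1, hq⟩) (not_le.2 hxb)
    -- Q b
    have hQb : Q b := by
      rcases eq_or_lt_of_le hbge with h | h
      · rw [← h]; exact hQ1
      · -- b > x₁, use limit from the left
        have hlim : Tendsto φ (𝓝[<] b) (𝓝 (φ b)) :=
          (hcφ.tendsto b).mono_left nhdsWithin_le_nhds
        have hlt : ∀ z, z < b → |φ z| ≤ φ b := by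
          intro z hz
          refine ge_of_tendsto hlim ?_
          have : Ioo (max z x₁) b ∈ 𝓝[<] b := by
            apply Ioo_mem_nhdsLT_of_mem
            constructor
            · exact lt_of_lt_of_le (max_lt hz h) (le_refl b)
            · exact le_refl b
          filter_upwards [this] with y hy
          exact hgood y (le_of_lt (lt_of_le_of_lt (le_max_right z x₁) hy.1)) hy.2 z
            (le_of_lt (lt_of_le_of_lt (le_max_left z x₁) hy.1))
        intro z hz
        rcases lt_or_eq_of_le hz with hz' | hz'
        · exact hlt z hz'
        · -- z = b ; show φ b ≥ 0 hence |φ b| = φ b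
          have h0 : (0:ℝ) ≤ φ b := le_trans (abs_nonneg (φ x₁)) (hlt x₁ h)
          rw [hz', abs_of_nonneg h0]
    have hφb : M₀ < φ b := lt_of_lt_of_le h1 (le_trans (le_abs_self _) (hQb x₁ hbge))
    -- derivative positive at b, hence on a small interval to the right
    have hd : 0 < φ' b := by
      have := key b hQb (le_of_lt hφb)
      nlinarith
    obtain ⟨ε, hε, hball⟩ := Metric.isOpen_iff.1 (isOpen_Ioi.preimage hcont) b hd
    set δ := ε/2 with hδdef
    have hδ : 0 < δ := by positivity
    have hpos : ∀ y ∈ Icc b (b + δ), 0 < φ' y := by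
      intro y hy
      apply hball
      rw [Metric.mem_ball, Real.dist_eq, abs_of_nonneg (by linarith [hy.1])]
      linarith [hy.2]
    -- φ strictly monotone on [b, b+δ]
    have hmono : StrictMonoOn φ (Icc b (b + δ)) := by
      apply strictMonoOn_of_deriv_pos (convex_Icc _ _) (hcφ.continuousOn)
      intro y hy
      rw [interior_Icc] at hy
      rw [(hderiv y).deriv]
      exact hpos y ⟨le_of_lt hy.1, le_of_lt hy.2⟩
    -- Q holds on (b, b+δ]
    have hQright : ∀ y, b < y → y ≤ b + δ → Q y := by
      intro y hby hyδ z hz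
      have hyIcc : y ∈ Icc b (b + δ) := ⟨le_of_lt hby, hyδ⟩
      have hφby : φ b < φ y := hmono ⟨le_refl b, by linarith⟩ hyIcc hby
      rcases le_or_gt z b with hzb | hzb
      · exact le_of_lt (lt_of_le_of_lt (hQb z hzb) hφby)
      · have hzIcc : z ∈ Icc b (b + δ) := ⟨le_of_lt hzb, le_trans hz hyδ⟩
        have hφbz : φ b < φ z := hmono ⟨le_refl b, by linarith [hzIcc.2]⟩ hzIcc hzb
        have hzy : φ z ≤ φ y := hmono.monotoneOn hzIcc hyIcc hz
        rw [abs_of_pos (by linarith : 0 < φ z)]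
        exact hzy
    -- contradiction: B ⊆ (b+δ, ∞), so sInf B ≥ b + δ > b
    have : b + δ ≤ b := by
      rw [hbdef]
      apply le_csInf hBne
      intro x hx
      by_contra hxlt
      push_neg at hxlt
      rcases le_or_gt x b with hxb | hxb
      · rcases lt_or_eq_of_le hxb with h' | h'
        · exact absurd (csInf_le hBbd hx) (not_le.2 h')
        · exact hx.2 (h' ▸ hQb)
      · exact hx.2 (hQright x hxb (le_of_lt hxlt))
    linarith
  -- Now: φ' ≥ (1-η)M₀/c for x ≥ x₁, hence φ grows at least linearly
  have hbound : ∀ x, x₁ ≤ x → M₀ ≤ φ x :=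
    fun x hx => le_trans (le_of_lt h1) (le_trans (le_abs_self _) (main x hx x₁ hx))
  set δ₀ := (1 - η) * M₀ / c with hδ₀def
  have hδ₀ : 0 < δ₀ := div_pos (mul_pos (by linarith) hM₀) hc
  have hderivge : ∀ y ∈ interior (Ici x₁), δ₀ ≤ deriv φ y := by
    intro y hy
    rw [interior_Ici] at hy
    have hy1 : x₁ ≤ y := le_of_lt hy
    have hk := key y (main y hy1) (hbound y hy1)
    rw [(hderiv y).deriv, hδ₀def, div_le_iff₀ hc]
    nlinarith [hbound y hy1]
  have hgrow : ∀ x, x₁ ≤ x → δ₀ * (x - x₁) ≤ φ x - φ x₁ :=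
    fun x hx => (convex_Ici x₁).mul_sub_le_image_sub_of_le_deriv hcφ.continuousOn
      (fun y hy => ((hderiv y).differentiableAt).differentiableWithinAt) hderivge
      x₁ (self_mem_Ici) x hx hx
  apply tendsto_atTop_mono' atTop
    (show ∀ᶠ x in atTop, φ x₁ + δ₀ * (x - x₁) ≤ φ x by
      filter_upwards [eventually_ge_atTop x₁] with x hx
      linarith [hgrow x hx])
  have : Tendsto (fun x : ℝ => x - x₁) atTop atTop := tendsto_atTop_add_const_right _ _ tendsto_id
  exact tendsto_atTop_add_const_left _ _ (this.const_mul_atTop hδ₀)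

/-- Lemma 1.3: under (G3), a globally defined solution with
φ(−∞) = 1 is either bounded by M₀ everywhere or tends to +∞ or −∞ as x → ∞. -/
theorem stmt9 (N : ℕ) (c M₀ η : ℝ) (hc : 0 < c) (hM₀ : 1 < M₀)
    (hη : η ∈ Set.Ioo (0:ℝ) 1)
    (κ : Fin N → ℝ) (hκ : ∀ i, 0 < κ i)
    (g : ℝ → (Fin N → ℝ) → ℝ)
    (hG3 : ∀ (s₀ : ℝ) (s : Fin N → ℝ),
      (∀ i, |s i| ≤ |s₀|) → M₀ ≤ |s₀| → |g s₀ s + s₀| ≤ η * |s₀|)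
    (φ φ' : ℝ → ℝ)
    (hderiv : ∀ x, HasDerivAt φ (φ' x) x) (hcont : Continuous φ')
    (heq : ∀ x, c * φ' x = - g (φ x) (fun i => φ (x - κ i)))
    (hbc : Tendsto φ atBot (𝓝 1)) :
    (∀ x, |φ x| ≤ M₀) ∨ Tendsto φ atTop atTop ∨ Tendsto φ atTop atBot := by
  by_cases hbdd : ∀ x, |φ x| ≤ M₀
  · exact Or.inl hbdd
  right
  push_neg at hbdd
  obtain ⟨x₀, hx₀⟩ := hbdd
  have hcφ : Continuous φ := by
    rw [continuous_iff_continuousAt]; exact fun x => (hderiv x).continuousAt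
  -- bound near -∞
  have hA : ∃ A, ∀ y ≤ A, |φ y| ≤ M₀ := by
    have := Metric.tendsto_nhds.1 hbc (M₀ - 1) (by linarith)
    rw [eventually_atBot] at this
    obtain ⟨A, hA⟩ := this
    refine ⟨A, fun y hy => ?_⟩
    have := hA y hy
    rw [Real.dist_eq] at this
    have h1 : |φ y| ≤ |φ y - 1| + 1 := by
      calc |φ y| = |(φ y - 1) + 1| := by ring_nf
        _ ≤ |φ y - 1| + |(1:ℝ)| := abs_add_le _ _
        _ = |φ y - 1| + 1 := by rw [abs_one]
    linarith
  obtain ⟨A, hA⟩ := hA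
  set A' := min A x₀ with hA'def
  have hA'x₀ : A' ≤ x₀ := min_le_right _ _
  -- maximum of |φ| on [A', x₀]
  obtain ⟨x₁, hx₁mem, hx₁max⟩ := isCompact_Icc.exists_isMaxOn (nonempty_Icc.2 hA'x₀)
    (hcφ.abs.continuousOn : ContinuousOn (fun y => |φ y|) (Icc A' x₀))
  have hmax : ∀ y ∈ Icc A' x₀, |φ y| ≤ |φ x₁| := fun y hy => hx₁max hy
  have hM₀x₁ : M₀ < |φ x₁| :=
    lt_of_lt_of_le hx₀ (hmax x₀ ⟨hA'x₀, le_refl _⟩)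
  have hhist : ∀ z ≤ x₁, |φ z| ≤ |φ x₁| := by
    intro z hz
    rcases le_or_gt z A' with hzA | hzA
    · exact le_trans (hA z (le_trans hzA (min_le_left _ _))) (le_of_lt hM₀x₁)
    · exact hmax z ⟨le_of_lt hzA, le_trans hz hx₁mem.2⟩
  obtain ⟨hη0, hη1⟩ := hη
  have hM₀pos : (0:ℝ) < M₀ := by linarith
  rcases le_or_gt 0 (φ x₁) with hsgn | hsgn
  · -- positive case
    left
    have habs : |φ x₁| = φ x₁ := abs_of_nonneg hsgn
    exact stmt9_core N c M₀ η hc hM₀pos hη0 hη1 κ hκ g hG3 φ φ' hderiv hcont heq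
      x₁ (habs ▸ hM₀x₁) (fun z hz => habs ▸ hhist z hz)
  · -- negative case: apply core lemma to -φ
    right
    have habs : |φ x₁| = -(φ x₁) := abs_of_neg hsgn
    have hcore := stmt9_core N c M₀ η hc hM₀pos hη0 hη1 κ hκ
      (fun a v => - g (-a) (fun i => -(v i)))
      (by
        intro s₀ s hs hM
        have := hG3 (-s₀) (fun i => -(s i)) (by
          intro i; rw [abs_neg, abs_neg]; exact hs i) (by rwa [abs_neg])
        calc |(-g (-s₀) fun i => -s i) + s₀| = |g (-s₀) (fun i => -s i) + -s₀| := by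
              rw [← abs_neg]; ring_nf
          _ ≤ η * |(-s₀)| := this
          _ = η * |s₀| := by rw [abs_neg])
      (fun x => - φ x) (fun x => - φ' x)
      (fun x => (hderiv x).neg) hcont.neg
      (by
        intro x
        simp only [neg_neg]
        have := heq x
        linarith)
      x₁ (by show M₀ < -(φ x₁); rw [← habs]; exact hM₀x₁)
      (by
        intro z hz
        show |(fun x => -φ x) z| ≤ -(φ x₁)
        simp only [abs_neg]
        rw [← habs]
        exact hhist z hz)
    have : Tendsto (fun x => -(- φ x)) atTop atBot := tendsto_neg_atTop_atBot.comp hcore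
    simpa using this
end

section
/- Let g : ℝ^{N+1} → ℝ satisfy (G1.3): there exists β ∈ ℝ^{N+1} with β₀ < 0, βᵢ > 0 (i ≥ 1), Σβᵢ > 0, such that 0 < g(s) whenever 0 < s₀ < sᵢ < 1 for all i = 1,…,N. Let φ solve c·φ'(x) = −g(φ(x), φ(x−κ₁), …, φ(x−κ_N)) with c > 0, κᵢ > 0, φ(−∞) = 1, and suppose φ(x) ∈ (0,1) for all x ≤ x₀. Then φ'(x) < 0 for all x ≤ x₀. -/
open Real Filter Set Topology

/-- Lemma 3.1: under (G1.3), a solution with φ(−∞) = 1 which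
stays in (0,1) up to x₀ is strictly decreasing on (−∞, x₀]. -/
theorem stmt10 (N : ℕ) (hN : 0 < N) (c : ℝ) (hc : 0 < c)
    (κ : Fin N → ℝ) (hκ : ∀ i, 0 < κ i)
    (g : ℝ → (Fin N → ℝ) → ℝ)
    (hG13 : ∃ (β₀ : ℝ) (β : Fin N → ℝ), β₀ < 0 ∧ (∀ i, 0 < β i) ∧
      0 < β₀ + ∑ i, β i ∧
      ∀ (s₀ : ℝ) (s : Fin N → ℝ),
        0 < s₀ → (∀ i, s₀ < s i) → (∀ i, s i < 1) → 0 < g s₀ s)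
    (φ φ' : ℝ → ℝ)
    (hderiv : ∀ x, HasDerivAt φ (φ' x) x)
    (heq : ∀ x, c * φ' x = - g (φ x) (fun i => φ (x - κ i)))
    (hbc : Tendsto φ atBot (𝓝 1))
    (x₀ : ℝ) (hrange : ∀ x, x ≤ x₀ → φ x ∈ Set.Ioo (0:ℝ) 1) :
    ∀ x, x ≤ x₀ → φ' x < 0 := by
  obtain ⟨β₀, β, hβ₀, hβ, hβsum, hpos⟩ := hG13
  have hcont : Continuous φ := by
    rw [continuous_iff_continuousAt]
    exact fun x => (hderiv x).continuousAt
  have : Nonempty (Fin N) := Fin.pos_iff_nonempty.mp hN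
  set κm : ℝ := Finset.univ.inf' Finset.univ_nonempty κ with hκm
  have hκmpos : 0 < κm := by
    rw [hκm, Finset.lt_inf'_iff]
    exact fun i _ => hκ i
  have hκmle : ∀ i, κm ≤ κ i := fun i =>
    Finset.inf'_le κ (Finset.mem_univ i)
  -- key consequence of (G1.3)
  have key : ∀ y, y ≤ x₀ → 0 ≤ φ' y → ∃ i, φ (y - κ i) ≤ φ y := by
    intro y hy hy'
    by_contra h
    push_neg at h
    have hg : 0 < g (φ y) (fun i => φ (y - κ i)) := by
      refine hpos _ _ (hrange y hy).1 (fun i => h i) (fun i => ?_)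
      exact (hrange (y - κ i) (by linarith [hκ i])).2
    have := heq y
    nlinarith
  intro x₁ hx₁
  by_contra hx1'
  push_neg at hx1'
  -- φ attains a minimum on (-∞, x₁]
  set r : ℝ := (φ x₁ + 1) / 2 with hr
  have hφx₁lt : φ x₁ < 1 := (hrange x₁ hx₁).2
  have hrlt : r < 1 := by rw [hr]; linarith
  have hφr : φ x₁ < r := by rw [hr]; linarith
  obtain ⟨M, hM⟩ := (eventually_atBot.mp (hbc.eventually (eventually_gt_nhds hrlt)))
  set M' : ℝ := min M x₁ with hM'
  have hM'le : M' ≤ x₁ := min_le_right _ _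
  obtain ⟨ξ, hξmem, hξmin⟩ :=
    (isCompact_Icc (a := M') (b := x₁)).exists_isMinOn (nonempty_Icc.mpr hM'le)
    (hcont.continuousOn)
  set m : ℝ := φ ξ with hm
  have hξle : ξ ≤ x₁ := hξmem.2
  have hmle : m ≤ φ x₁ := hξmin (by exact ⟨hM'le, le_refl _⟩)
  have hmin : ∀ y, y ≤ x₁ → m ≤ φ y := by
    intro y hy
    rcases le_or_gt M' y with h | h
    · exact hξmin ⟨h, hy⟩
    · have : r < φ y := hM y (le_trans h.le (min_le_left _ _))
      linarith
  -- any min point ≤ x₁ yields another min point at least κm to the left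
  have step : ∀ x, x ≤ x₁ → φ x = m → ∃ x', x' ≤ x - κm ∧ x' ≤ x₁ ∧ φ x' = m := by
    intro x hx hφx
    have hd : 0 ≤ φ' x := by
      rcases eq_or_lt_of_le hx with heq1 | hlt
      · rw [heq1]; exact hx1'
      · have hloc : IsLocalMin φ x := by
          have : Iio x₁ ∈ 𝓝 x := Iio_mem_nhds hlt
          filter_upwards [this] with y hy
          rw [hφx]; exact hmin y hy.le
        rw [hloc.hasDerivAt_eq_zero (hderiv x)]
    obtain ⟨i, hi⟩ := key x (hx.trans hx₁) hd
    refine ⟨x - κ i, by linarith [hκmle i], by linarith [hκ i], le_antisymm ?_ ?_⟩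
    · rw [← hφx]; exact hi
    · exact hmin _ (by linarith [hκ i])
  have iter : ∀ n : ℕ, ∃ x, x ≤ x₁ - n * κm ∧ x ≤ x₁ ∧ φ x = m := by
    intro n
    induction n with
    | zero => exact ⟨ξ, by simpa using hξle, hξle, rfl⟩
    | succ n ih =>
      obtain ⟨x, hx, hx', hφx⟩ := ih
      obtain ⟨x', h1, h2, h3⟩ := step x hx' hφx
      refine ⟨x', ?_, h2, h3⟩
      push_cast
      linarith
  have hm1 : m < 1 := lt_of_le_of_lt hmle hφx₁lt
  obtain ⟨B, hB⟩ := eventually_atBot.mp (hbc.eventually (eventually_gt_nhds hm1))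
  obtain ⟨n, hn⟩ := exists_nat_ge ((x₁ - B) / κm)
  obtain ⟨x, hx, hx', hφx⟩ := iter n
  have : x ≤ B := by
    have : x₁ - B ≤ n * κm := by
      rw [div_le_iff₀ hκmpos] at hn
      linarith
    linarith
  have := hB x this
  rw [hφx] at this
  exact lt_irrefl _ this
end
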